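/- Let X, A ∈ ℝ^{d×n} and τ > 0. If X* = S_τ(A) is the singular value thresholding of A, then 0 ∈ τ·∂‖X*‖_* + X* − A, i.e., X* satisfies the stationarity equation τ G + X* − A = 0 for some subgradient G ∈ ∂‖X*‖_*. -/

import Mathlib

open Matrix

/-- The nuclear norm of a matrix: the sum of its singular values, i.e. the sum of the
square roots of the eigenvalues of XᴴX. -/
noncomputable def nuclearNorm {d n : ℕ} (X : Matrix (Fin d) (Fin n) ℝ) : ℝ :=
  ∑ i, Real.sqrt ((Matrix.isHermitian_conjTranspose_mul_self X).eigenvalues i)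

private lemma aux_dp {d n : ℕ} (M : Matrix (Fin d) (Fin n) ℝ) (x : Fin n → ℝ) (z : Fin d → ℝ) :
    (M *ᵥ x) ⬝ᵥ z = x ⬝ᵥ (Mᵀ *ᵥ z) := by
  rw [dotProduct_comm, dotProduct_mulVec, ← mulVec_transpose, dotProduct_comm]

private lemma aux_cs (k : ℕ) (a b : Fin k → ℝ) :
    a ⬝ᵥ b ≤ Real.sqrt (a ⬝ᵥ a) * Real.sqrt (b ⬝ᵥ b) := by
  have h := Finset.sum_mul_sq_le_sq_mul_sq Finset.univ a b
  have ha : (0:ℝ) ≤ a ⬝ᵥ a := by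
    simpa [dotProduct] using Finset.sum_nonneg (fun i _ => mul_self_nonneg (a i))
  refine (le_abs_self _).trans ?_
  rw [← Real.sqrt_mul_self (abs_nonneg _), ← Real.sqrt_mul ha]
  apply Real.sqrt_le_sqrt
  calc |a ⬝ᵥ b| * |a ⬝ᵥ b| = (a ⬝ᵥ b)^2 := by rw [pow_two, abs_mul_abs_self]
    _ ≤ _ := by simpa [dotProduct, pow_two] using h

private lemma aux_dp_nonneg (k : ℕ) (a : Fin k → ℝ) : (0:ℝ) ≤ a ⬝ᵥ a := by
  simpa [dotProduct] using Finset.sum_nonneg (fun i _ => mul_self_nonneg (a i))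

private lemma aux_WWt {n : ℕ} {N : Matrix (Fin n) (Fin n) ℝ} (hN : N.IsHermitian) :
    (hN.eigenvectorUnitary : Matrix (Fin n) (Fin n) ℝ) *
      (hN.eigenvectorUnitary : Matrix (Fin n) (Fin n) ℝ)ᵀ = 1 := by
  have := (Matrix.mem_unitaryGroup_iff).mp hN.eigenvectorUnitary.2
  simpa [Matrix.star_eq_conjTranspose, conjTranspose_eq_transpose_of_trivial] using this

private lemma aux_WtW {n : ℕ} {N : Matrix (Fin n) (Fin n) ℝ} (hN : N.IsHermitian) :
    (hN.eigenvectorUnitary : Matrix (Fin n) (Fin n) ℝ)ᵀ *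
      (hN.eigenvectorUnitary : Matrix (Fin n) (Fin n) ℝ) = 1 :=
  mul_eq_one_comm.mp (aux_WWt hN)

private lemma aux_basis_dp {n : ℕ} {N : Matrix (Fin n) (Fin n) ℝ} (hN : N.IsHermitian)
    (j : Fin n) :
    (⇑(hN.eigenvectorBasis j) : Fin n → ℝ) ⬝ᵥ (⇑(hN.eigenvectorBasis j) : Fin n → ℝ) = 1 := by
  have h := congrFun (congrFun (aux_WtW hN) j) j
  simpa [Matrix.mul_apply, Matrix.one_apply, dotProduct, transpose_apply] using h

private lemma aux_trace_quad {n : ℕ} {N : Matrix (Fin n) (Fin n) ℝ} (hN : N.IsHermitian)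
    (M : Matrix (Fin n) (Fin n) ℝ) :
    M.trace = ∑ j, (⇑(hN.eigenvectorBasis j) : Fin n → ℝ) ⬝ᵥ (M *ᵥ ⇑(hN.eigenvectorBasis j)) := by
  set W : Matrix (Fin n) (Fin n) ℝ := (hN.eigenvectorUnitary : Matrix (Fin n) (Fin n) ℝ) with hWdef
  have key : M.trace = (Wᵀ * M * W).trace := by
    rw [trace_mul_comm, ← mul_assoc, aux_WWt hN, one_mul]
  have hWij : ∀ i j, (⇑(hN.eigenvectorBasis j) : Fin n → ℝ) i = W i j := fun i j => rfl
  rw [key]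
  simp only [Matrix.trace, Matrix.diag_apply, Matrix.mul_apply, dotProduct, mulVec,
    dotProduct, transpose_apply, hWij]
  refine Finset.sum_congr rfl fun j _ => ?_
  simp_rw [Finset.sum_mul, Finset.mul_sum]
  rw [Finset.sum_comm]
  exact Finset.sum_congr rfl fun i _ => Finset.sum_congr rfl fun k _ => by ring

/-- If G is a contraction in the operator-norm sense, then ⟨G, Y⟩ ≤ ‖Y‖_*. -/
private lemma aux_trace_le_nuclear {d n : ℕ} (G Y : Matrix (Fin d) (Fin n) ℝ)
    (hG : ∀ x : Fin n → ℝ, (G *ᵥ x) ⬝ᵥ (G *ᵥ x) ≤ x ⬝ᵥ x) :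
    (Gᵀ * Y).trace ≤ nuclearNorm Y := by
  have hN := Matrix.isHermitian_conjTranspose_mul_self Y
  rw [aux_trace_quad hN]
  unfold nuclearNorm
  refine Finset.sum_le_sum fun j _ => ?_
  set w : Fin n → ℝ := ⇑(hN.eigenvectorBasis j) with hw
  have hYH : Yᴴ = Yᵀ := conjTranspose_eq_transpose_of_trivial Y
  have hwdp : w ⬝ᵥ w = 1 := aux_basis_dp hN j
  have hμ : (Yᴴ * Y) *ᵥ w = hN.eigenvalues j • w := hN.mulVec_eigenvectorBasis j
  have hYw : (Y *ᵥ w) ⬝ᵥ (Y *ᵥ w) = hN.eigenvalues j := by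
    rw [aux_dp, mulVec_mulVec, ← hYH, hμ]
    simp [dotProduct, Finset.mul_sum, hwdp, mul_comm]
    calc ∑ i, w i * (w i * hN.eigenvalues j) = hN.eigenvalues j * (w ⬝ᵥ w) := by
          simp [dotProduct, Finset.mul_sum]; exact Finset.sum_congr rfl fun i _ => by ring
      _ = hN.eigenvalues j := by rw [hwdp, mul_one]
  have h1 : (Gᵀ * Y) *ᵥ w = Gᵀ *ᵥ (Y *ᵥ w) := (mulVec_mulVec _ _ _).symm
  rw [h1, ← aux_dp]
  calc (G *ᵥ w) ⬝ᵥ (Y *ᵥ w)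
      ≤ Real.sqrt ((G *ᵥ w) ⬝ᵥ (G *ᵥ w)) * Real.sqrt ((Y *ᵥ w) ⬝ᵥ (Y *ᵥ w)) := aux_cs _ _ _
    _ ≤ 1 * Real.sqrt (hN.eigenvalues j) := by
        rw [hYw]
        apply mul_le_mul_of_nonneg_right _ (Real.sqrt_nonneg _)
        calc Real.sqrt ((G *ᵥ w) ⬝ᵥ (G *ᵥ w)) ≤ Real.sqrt (w ⬝ᵥ w) :=
              Real.sqrt_le_sqrt (hG w)
          _ = 1 := by rw [hwdp, Real.sqrt_one]
    _ = Real.sqrt (hN.eigenvalues j) := one_mul _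

/-- Nuclear norm of U diag(m) Vᵀ equals ∑ m when m ≥ 0 and U, V have orthonormal columns. -/
private lemma aux_nuclearNorm_eq {d n : ℕ} (U : Matrix (Fin d) (Fin n) ℝ)
    (V : Matrix (Fin n) (Fin n) ℝ) (m : Fin n → ℝ) (hm : ∀ j, 0 ≤ m j)
    (hU : Uᵀ * U = 1) (hV : Vᵀ * V = 1) :
    nuclearNorm (U * Matrix.diagonal m * Vᵀ) = ∑ j, m j := by
  set X : Matrix (Fin d) (Fin n) ℝ := U * Matrix.diagonal m * Vᵀ with hXdef
  have hN := Matrix.isHermitian_conjTranspose_mul_self X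
  have hVVt : V * Vᵀ = 1 := mul_eq_one_comm.mp hV
  have hXH : Xᴴ = V * Matrix.diagonal m * Uᵀ := by
    rw [hXdef, conjTranspose_eq_transpose_of_trivial, transpose_mul, transpose_mul,
      transpose_transpose, diagonal_transpose, ← Matrix.mul_assoc]
  have hNX : Xᴴ * X = V * Matrix.diagonal (fun j => m j * m j) * Vᵀ := by
    rw [hXH, hXdef]
    calc V * Matrix.diagonal m * Uᵀ * (U * Matrix.diagonal m * Vᵀ)
        = V * Matrix.diagonal m * (Uᵀ * U) * Matrix.diagonal m * Vᵀ := by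
          simp only [Matrix.mul_assoc]
      _ = V * (Matrix.diagonal m * Matrix.diagonal m) * Vᵀ := by
          rw [hU, mul_one]; simp only [mul_assoc]
      _ = V * Matrix.diagonal (fun j => m j * m j) * Vᵀ := by
          rw [diagonal_mul_diagonal]
  have hμ0 : ∀ i, 0 ≤ hN.eigenvalues i := fun i =>
    Matrix.eigenvalues_conjTranspose_mul_self_nonneg X i
  -- key per-eigenvalue computation
  have key : ∀ i, Real.sqrt (hN.eigenvalues i)
      = ∑ j, m j * ((Vᵀ *ᵥ ⇑(hN.eigenvectorBasis i)) j)^2 := by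
    intro i
    set w : Fin n → ℝ := ⇑(hN.eigenvectorBasis i) with hw
    set u : Fin n → ℝ := Vᵀ *ᵥ w with hu
    have h1 : (Xᴴ * X) *ᵥ w = hN.eigenvalues i • w := hN.mulVec_eigenvectorBasis i
    have h2 : Matrix.diagonal (fun j => m j * m j) *ᵥ u = hN.eigenvalues i • u := by
      have : Vᵀ * (Xᴴ * X) = Matrix.diagonal (fun j => m j * m j) * Vᵀ := by
        rw [hNX, ← mul_assoc, ← mul_assoc, hV, one_mul]
      calc Matrix.diagonal (fun j => m j * m j) *ᵥ u
          = (Matrix.diagonal (fun j => m j * m j) * Vᵀ) *ᵥ w := by rw [hu, mulVec_mulVec]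
        _ = (Vᵀ * (Xᴴ * X)) *ᵥ w := by rw [this]
        _ = Vᵀ *ᵥ ((Xᴴ * X) *ᵥ w) := by rw [mulVec_mulVec]
        _ = Vᵀ *ᵥ (hN.eigenvalues i • w) := by rw [h1]
        _ = hN.eigenvalues i • u := by rw [mulVec_smul, hu]
    have h3 : ∀ j, m j * (u j)^2 = Real.sqrt (hN.eigenvalues i) * (u j)^2 := by
      intro j
      rcases eq_or_ne (u j) 0 with h | h
      · rw [h]; ring
      · have hcomp : m j * m j * u j = hN.eigenvalues i * u j := by
          have := congrFun h2 j
          simpa [mulVec_diagonal, Pi.smul_apply, smul_eq_mul] using this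
        have hmm : m j * m j = hN.eigenvalues i := mul_right_cancel₀ h hcomp
        rw [← hmm, Real.sqrt_mul_self (hm j)]
    have h4 : u ⬝ᵥ u = 1 := by
      rw [hu, aux_dp, transpose_transpose, mulVec_mulVec, hVVt, one_mulVec]
      exact aux_basis_dp hN i
    calc Real.sqrt (hN.eigenvalues i) = Real.sqrt (hN.eigenvalues i) * (u ⬝ᵥ u) := by
          rw [h4, mul_one]
      _ = ∑ j, Real.sqrt (hN.eigenvalues i) * (u j)^2 := by
          simp [dotProduct, Finset.mul_sum, pow_two]
      _ = ∑ j, m j * (u j)^2 := by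
          exact Finset.sum_congr rfl fun j _ => (h3 j).symm
  -- column sums of squares of Vᵀ * W are 1
  have col : ∀ j, ∑ i, ((Vᵀ *ᵥ ⇑(hN.eigenvectorBasis i)) j)^2 = 1 := by
    intro j
    set W : Matrix (Fin n) (Fin n) ℝ := (hN.eigenvectorUnitary : Matrix (Fin n) (Fin n) ℝ)
      with hWdef
    have hWij : ∀ a b, (⇑(hN.eigenvectorBasis b) : Fin n → ℝ) a = W a b := fun a b => rfl
    have hentry : ∀ i, (Vᵀ *ᵥ ⇑(hN.eigenvectorBasis i)) j = (Vᵀ * W) j i := by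
      intro i
      simp [mulVec, Matrix.mul_apply, dotProduct, hWij]
      rfl
    have hC : (Vᵀ * W) * (Vᵀ * W)ᵀ = 1 := by
      rw [transpose_mul, transpose_transpose, mul_assoc, ← mul_assoc W, aux_WWt hN, one_mul, hV]
    have := congrFun (congrFun hC j) j
    simp only [Matrix.mul_apply, transpose_apply, Matrix.one_apply_eq] at this
    calc ∑ i, ((Vᵀ *ᵥ ⇑(hN.eigenvectorBasis i)) j)^2
        = ∑ i, (Vᵀ * W) j i * (Vᵀ * W) j i := by
          exact Finset.sum_congr rfl fun i _ => by rw [hentry, pow_two]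
      _ = 1 := this
  unfold nuclearNorm
  calc ∑ i, Real.sqrt ((Matrix.isHermitian_conjTranspose_mul_self X).eigenvalues i)
      = ∑ i, ∑ j, m j * ((Vᵀ *ᵥ ⇑(hN.eigenvectorBasis i)) j)^2 :=
        Finset.sum_congr rfl fun i _ => key i
    _ = ∑ j, m j * ∑ i, ((Vᵀ *ᵥ ⇑(hN.eigenvectorBasis i)) j)^2 := by
        rw [Finset.sum_comm]
        exact Finset.sum_congr rfl fun j _ => by rw [Finset.mul_sum]
    _ = ∑ j, m j := Finset.sum_congr rfl fun j _ => by rw [col j, mul_one]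

private lemma aux_entry_sum {d n : ℕ} (G Z : Matrix (Fin d) (Fin n) ℝ) :
    ∑ i, ∑ j, G i j * Z i j = (Gᵀ * Z).trace := by
  simp only [Matrix.trace, Matrix.diag_apply, Matrix.mul_apply, transpose_apply]
  exact Finset.sum_comm

/-- if X* = S_τ(A) = U diag(max(σᵢ−τ,0)) Vᵀ is the singular value
thresholding of A = U diag(σ) Vᵀ, then 0 ∈ τ∂‖X*‖_* + X* − A: there is a subgradient
G of the nuclear norm at X* with τG + X* − A = 0. -/
theorem stmt17 {d n : ℕ} (τ : ℝ) (hτ : 0 < τ)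
    (A : Matrix (Fin d) (Fin n) ℝ)
    (U : Matrix (Fin d) (Fin n) ℝ) (V : Matrix (Fin n) (Fin n) ℝ)
    (σ : Fin n → ℝ) (hσ : ∀ i, 0 ≤ σ i)
    (hU : Uᵀ * U = 1) (hV : Vᵀ * V = 1)
    (hA : A = U * Matrix.diagonal σ * Vᵀ)
    (Xstar : Matrix (Fin d) (Fin n) ℝ)
    (hX : Xstar = U * Matrix.diagonal (fun i => max (σ i - τ) 0) * Vᵀ) :
    ∃ G : Matrix (Fin d) (Fin n) ℝ,
      (∀ Y : Matrix (Fin d) (Fin n) ℝ,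
        nuclearNorm Xstar + ∑ i, ∑ j, G i j * (Y - Xstar) i j ≤ nuclearNorm Y) ∧
      τ • G + Xstar - A = 0 := by
  have hτ' : τ ≠ 0 := ne_of_gt hτ
  set m : Fin n → ℝ := fun i => max (σ i - τ) 0 with hm
  set g : Fin n → ℝ := fun i => min (σ i) τ / τ with hg
  have hg0 : ∀ j, 0 ≤ g j := fun j => div_nonneg (le_min (hσ j) hτ.le) hτ.le
  have hg1 : ∀ j, g j ≤ 1 := fun j => by
    rw [hg, div_le_one hτ]; exact min_le_right _ _
  have hgm : ∀ j, g j * m j = m j := by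
    intro j
    rcases le_or_gt (σ j) τ with h | h
    · have : m j = 0 := by simp [hm, sub_nonpos.mpr h]
      rw [this, mul_zero]
    · have : g j = 1 := by rw [hg]; simp [min_eq_right h.le, div_self hτ']
      rw [this, one_mul]
  have hτg : ∀ j, τ * g j = σ j - m j := by
    intro j
    rw [hg, hm, mul_div_cancel₀ _ hτ']
    rcases le_or_gt (σ j) τ with h | h
    · simp [min_eq_left h, max_eq_right (sub_nonpos.mpr h)]
    · simp [min_eq_right h.le, max_eq_left (sub_nonneg.mpr h.le)]
  refine ⟨U * Matrix.diagonal g * Vᵀ, ?_, ?_⟩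
  · -- subgradient inequality
    intro Y
    set G : Matrix (Fin d) (Fin n) ℝ := U * Matrix.diagonal g * Vᵀ with hGdef
    have hVVt : V * Vᵀ = 1 := mul_eq_one_comm.mp hV
    -- trace (Gᵀ Xstar) = ∑ m
    have htrX : (Gᵀ * Xstar).trace = ∑ j, m j := by
      have hGt : Gᵀ = V * Matrix.diagonal g * Uᵀ := by
        rw [hGdef, transpose_mul, transpose_mul, transpose_transpose, diagonal_transpose,
          ← Matrix.mul_assoc]
      have : Gᵀ * Xstar = V * Matrix.diagonal m * Vᵀ := by
        rw [hGt, hX]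
        calc V * Matrix.diagonal g * Uᵀ * (U * Matrix.diagonal m * Vᵀ)
            = V * Matrix.diagonal g * (Uᵀ * U) * Matrix.diagonal m * Vᵀ := by
              simp only [Matrix.mul_assoc]
          _ = V * (Matrix.diagonal g * Matrix.diagonal m) * Vᵀ := by
              rw [hU, Matrix.mul_one]; simp only [Matrix.mul_assoc]
          _ = V * Matrix.diagonal m * Vᵀ := by
              rw [diagonal_mul_diagonal]
              congr 2
              exact congrArg _ (funext hgm)
      rw [this, Matrix.trace_mul_comm, ← Matrix.mul_assoc, hV, Matrix.one_mul, trace_diagonal]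
    -- nuclearNorm Xstar = ∑ m
    have hnX : nuclearNorm Xstar = ∑ j, m j := by
      rw [hX]
      exact aux_nuclearNorm_eq U V m (fun j => le_max_right _ _) hU hV
    -- contraction property of G
    have hGc : ∀ x : Fin n → ℝ, (G *ᵥ x) ⬝ᵥ (G *ᵥ x) ≤ x ⬝ᵥ x := by
      intro x
      have hGx : G *ᵥ x = U *ᵥ (Matrix.diagonal g *ᵥ (Vᵀ *ᵥ x)) := by
        rw [mulVec_mulVec, mulVec_mulVec, hGdef]
      have hUiso : ∀ z : Fin n → ℝ, (U *ᵥ z) ⬝ᵥ (U *ᵥ z) = z ⬝ᵥ z := by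
        intro z
        rw [aux_dp, mulVec_mulVec, hU, one_mulVec]
      have hViso : (Vᵀ *ᵥ x) ⬝ᵥ (Vᵀ *ᵥ x) = x ⬝ᵥ x := by
        rw [aux_dp, transpose_transpose, mulVec_mulVec, hVVt, one_mulVec]
      set y : Fin n → ℝ := Vᵀ *ᵥ x with hy
      calc (G *ᵥ x) ⬝ᵥ (G *ᵥ x)
          = (Matrix.diagonal g *ᵥ y) ⬝ᵥ (Matrix.diagonal g *ᵥ y) := by rw [hGx, hUiso]
        _ = ∑ j, (g j * y j) * (g j * y j) := by
            simp [dotProduct, mulVec_diagonal]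
        _ ≤ ∑ j, y j * y j := by
            refine Finset.sum_le_sum fun j _ => ?_
            have h1 : (g j * y j) * (g j * y j) = (g j * g j) * (y j * y j) := by ring
            rw [h1]
            have := mul_le_one₀ (hg1 j) (hg0 j) (hg1 j)
            nlinarith [mul_self_nonneg (y j), hg0 j, hg1 j]
        _ = y ⬝ᵥ y := by simp [dotProduct]
        _ = x ⬝ᵥ x := hViso
    have hmain : (Gᵀ * Y).trace ≤ nuclearNorm Y := aux_trace_le_nuclear G Y hGc
    rw [aux_entry_sum, Matrix.mul_sub, Matrix.trace_sub, htrX, hnX]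
    linarith
  · -- stationarity equation
    have hsmul : τ • (U * Matrix.diagonal g * Vᵀ) = A - Xstar := by
      have h1 : τ • (U * Matrix.diagonal g * Vᵀ) = U * Matrix.diagonal (fun j => τ * g j) * Vᵀ := by
        have hdg : τ • Matrix.diagonal g = Matrix.diagonal (fun j => τ * g j) := by
          rw [← diagonal_smul]
          congr 1
        rw [← Matrix.smul_mul, ← Matrix.mul_smul, hdg]
      rw [h1, hA, hX]
      have h2 : (fun j => τ * g j) = fun j => σ j - m j := funext hτg
      rw [h2]
      have h3 : Matrix.diagonal (fun j => σ j - m j) = Matrix.diagonal σ - Matrix.diagonal m := by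
        rw [diagonal_sub]
      rw [h3, Matrix.mul_sub, Matrix.sub_mul]
    rw [hsmul]
    abel
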